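/- Let A ∈ ℝ^{m×m} be symmetric positive semidefinite and let λ > 0. Let W ∈ ℝ^{m×r} and Ŵ ∈ ℝ^{m×r̂} have orthonormal columns with r ≤ r̂ ≤ m and range(W) ⊆ range(Ŵ), and set T = Wᵀ A W and T̂ = Ŵᵀ A Ŵ. Then Trace(log(λ I + W T Wᵀ)) ≤ Trace(log(λ I + Ŵ T̂ Ŵᵀ)) ≤ Trace(log(λ I + A)). -/

import Mathlib

open Matrix

/-- Euclidean norm of a vector in `ℝ^m`. -/
noncomputable def euclNorm {m : ℕ} (y : Fin m → ℝ) : ℝ :=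
  Real.sqrt (y ⬝ᵥ y)

/-- The `A`-norm `‖v‖_A = √(vᵀ A v)`. -/
noncomputable def anorm {m : ℕ} (A : Matrix (Fin m) (Fin m) ℝ) (v : Fin m → ℝ) : ℝ :=
  Real.sqrt (v ⬝ᵥ A *ᵥ v)

/-- The range (column span) of a matrix `W ∈ ℝ^{m×r}`. -/
def colSpan {m r : ℕ} (W : Matrix (Fin m) (Fin r) ℝ) : Submodule ℝ (Fin m → ℝ) :=
  Submodule.span ℝ (Set.range Wᵀ)

/-- The block Krylov subspace `K_k(A, Z)`, the span of the columns of
`Z, AZ, …, A^{k-1} Z`. -/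
def krylov {m b : ℕ} (k : ℕ) (A : Matrix (Fin m) (Fin m) ℝ)
    (Z : Matrix (Fin m) (Fin b) ℝ) : Submodule ℝ (Fin m → ℝ) :=
  Submodule.span ℝ (⋃ j ∈ Finset.range k, Set.range (A ^ j * Z)ᵀ)

/-- The Krylov subspace `K_k(A, y)` for a vector `y`, the span of
`y, Ay, …, A^{k-1} y`. -/
def krylovVec {m : ℕ} (k : ℕ) (A : Matrix (Fin m) (Fin m) ℝ)
    (y : Fin m → ℝ) : Submodule ℝ (Fin m → ℝ) :=
  Submodule.span ℝ {v | ∃ j < k, v = (A ^ j) *ᵥ y}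

/-- Condition number: ratio of the largest to the smallest eigenvalue
(for a symmetric positive definite matrix, the spectrum is the set of its eigenvalues). -/
noncomputable def condNum {m : ℕ} (A : Matrix (Fin m) (Fin m) ℝ) : ℝ :=
  sSup (spectrum ℝ A) / sInf (spectrum ℝ A)

/-- `Trace(log M) = log (det M)` for a symmetric positive definite matrix `M`. -/
noncomputable def traceLog {n : ℕ} (M : Matrix (Fin n) (Fin n) ℝ) : ℝ :=
  Real.log M.det

/-- The eigenvalues of a symmetric matrix, sorted in decreasing order:
`eigDesc M i` is the `i`-th largest eigenvalue of `M` (`i` is 0-based). -/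
noncomputable def eigDesc {m : ℕ} (M : Matrix (Fin m) (Fin m) ℝ) : Fin m → ℝ :=
  open scoped Classical in
  if h : M.IsHermitian then fun i => (h.eigenvalues ∘ Tuple.sort h.eigenvalues) i.rev
  else 0



section Aux

variable {n : ℕ}

lemma smul_one_posDef {lam : ℝ} (h : 0 < lam) :
    (lam • (1 : Matrix (Fin n) (Fin n) ℝ)).PosDef := by
  rw [smul_one_eq_diagonal]
  exact Matrix.PosDef.diagonal fun _ => h

lemma one_le_det_one_add {N : Matrix (Fin n) (Fin n) ℝ} (hN : N.PosSemidef) :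
    1 ≤ (1 + N).det := by
  have hH := hN.1
  have hU := (Matrix.mem_unitaryGroup_iff).mp hH.eigenvectorUnitary.2
  have hdecomp : (1 : Matrix (Fin n) (Fin n) ℝ) + N =
      (hH.eigenvectorUnitary : Matrix (Fin n) (Fin n) ℝ) *
        (1 + diagonal (RCLike.ofReal ∘ hH.eigenvalues)) *
        (star (hH.eigenvectorUnitary : Matrix (Fin n) (Fin n) ℝ)) := by
    conv_lhs => rw [hH.spectral_theorem]
    rw [mul_add, mul_one, add_mul]
    congr 1
    exact hU.symm
  rw [hdecomp, det_mul, det_mul]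
  have hdetU : ((hH.eigenvectorUnitary : Matrix (Fin n) (Fin n) ℝ)).det *
      ((star (hH.eigenvectorUnitary : Matrix (Fin n) (Fin n) ℝ)).det) = 1 := by
    rw [← det_mul, hU, det_one]
  have h1 : (1 : Matrix (Fin n) (Fin n) ℝ) + diagonal (RCLike.ofReal ∘ hH.eigenvalues) =
      diagonal (fun i => 1 + hH.eigenvalues i) := by
    rw [← diagonal_one, diagonal_add]
    rfl
  rw [h1, det_diagonal, mul_right_comm, hdetU, one_mul]
  calc (1:ℝ) = ∏ _i : Fin n, (1:ℝ) := by simp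
    _ ≤ ∏ i, (1 + hH.eigenvalues i) :=
        Finset.prod_le_prod (fun i _ => zero_le_one)
          (fun i _ => by linarith [hN.eigenvalues_nonneg i])

end Aux

section Aux2
open Matrix
variable {n : ℕ}

lemma det_le_det_add {X D : Matrix (Fin n) (Fin n) ℝ}
    (hX : X.PosDef) (hD : D.PosSemidef) : X.det ≤ (X + D).det := by
  set S := (open scoped MatrixOrder in CFC.sqrt X) with hSdef
  have hSps := (open scoped MatrixOrder in (CFC.sqrt_nonneg X).posSemidef)
  have hSS : S * S = X := (open scoped MatrixOrder in CFC.sqrt_mul_sqrt_self X hX.posSemidef.nonneg)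
  have hdet : S.det * S.det = X.det := by rw [← det_mul, hSS]
  have hXdet := hX.det_pos
  have hSdet : S.det ≠ 0 := by intro h; rw [h, mul_zero] at hdet; linarith
  have hSunit : IsUnit S.det := isUnit_iff_ne_zero.mpr hSdet
  have hinv1 : S * S⁻¹ = 1 := mul_nonsing_inv _ hSunit
  have hinv2 : S⁻¹ * S = 1 := nonsing_inv_mul _ hSunit
  have hinvH : (S⁻¹)ᴴ = S⁻¹ := by rw [conjTranspose_nonsing_inv, hSps.1]
  have hN : (S⁻¹ * D * S⁻¹).PosSemidef := by
    have := hD.mul_mul_conjTranspose_same S⁻¹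
    rwa [hinvH] at this
  have key : X + D = S * (1 + S⁻¹ * D * S⁻¹) * S := by
    rw [mul_add, mul_one, add_mul, hSS]
    congr 1
    rw [← mul_assoc, ← mul_assoc, hinv1, one_mul, mul_assoc, hinv2, mul_one]
  have h1 := one_le_det_one_add hN
  calc X.det = X.det * 1 := (mul_one _).symm
    _ ≤ X.det * (1 + S⁻¹ * D * S⁻¹).det := by
        exact mul_le_mul_of_nonneg_left h1 (le_of_lt hXdet)
    _ = (X + D).det := by rw [key, det_mul, det_mul, mul_right_comm, hdet]

end Aux2

section Aux3
open Matrix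
variable {m r rh : ℕ}

lemma fix_of_mem (Wh : Matrix (Fin m) (Fin rh) ℝ) (hWh : Whᵀ * Wh = 1)
    {v : Fin m → ℝ} (hv : v ∈ colSpan Wh) : (Wh * Whᵀ) *ᵥ v = v := by
  induction hv using Submodule.span_induction with
  | mem x hx =>
      obtain ⟨k, rfl⟩ := hx
      have hx : Whᵀ k = Wh *ᵥ Pi.single k 1 := by
        ext i; simp [mulVec_single, transpose_apply]
      rw [hx, mulVec_mulVec, Matrix.mul_assoc, hWh, Matrix.mul_one]
  | zero => simp
  | add x y _ _ hx hy => rw [mulVec_add, hx, hy]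
  | smul c x _ hx => rw [mulVec_smul, hx]

lemma proj_fix_mat (W : Matrix (Fin m) (Fin r) ℝ)
    (Wh : Matrix (Fin m) (Fin rh) ℝ) (hWh : Whᵀ * Wh = 1)
    (hrange : colSpan W ≤ colSpan Wh) : (Wh * Whᵀ) * W = W := by
  ext i j
  have hcol : Wᵀ j ∈ colSpan Wh := hrange (Submodule.subset_span ⟨j, rfl⟩)
  have := congrFun (fix_of_mem Wh hWh hcol) i
  simpa [mulVec, dotProduct, mul_apply, transpose_apply] using this

lemma proj_diff_psd (W : Matrix (Fin m) (Fin r) ℝ) (hW : Wᵀ * W = 1)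
    (Wh : Matrix (Fin m) (Fin rh) ℝ) (hWh : Whᵀ * Wh = 1)
    (hrange : colSpan W ≤ colSpan Wh) :
    (Wh * Whᵀ - W * Wᵀ).PosSemidef := by
  have hPt : (W * Wᵀ)ᵀ = W * Wᵀ := by rw [transpose_mul, transpose_transpose]
  have hQt : (Wh * Whᵀ)ᵀ = Wh * Whᵀ := by rw [transpose_mul, transpose_transpose]
  have hPP : (W * Wᵀ) * (W * Wᵀ) = W * Wᵀ := by
    rw [← Matrix.mul_assoc, Matrix.mul_assoc W, hW, Matrix.mul_one]
  have hQQ : (Wh * Whᵀ) * (Wh * Whᵀ) = Wh * Whᵀ := by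
    rw [← Matrix.mul_assoc, Matrix.mul_assoc Wh, hWh, Matrix.mul_one]
  have hQP : (Wh * Whᵀ) * (W * Wᵀ) = W * Wᵀ := by
    rw [← Matrix.mul_assoc, proj_fix_mat W Wh hWh hrange]
  have hPQ : (W * Wᵀ) * (Wh * Whᵀ) = W * Wᵀ := by
    have h2 : ((Wh * Whᵀ) * (W * Wᵀ))ᵀ = W * Wᵀ := by rw [hQP, hPt]
    rw [transpose_mul, hPt, hQt] at h2
    exact h2
  have hsq : (Wh * Whᵀ - W * Wᵀ)ᴴ * (Wh * Whᵀ - W * Wᵀ) = Wh * Whᵀ - W * Wᵀ := by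
    have hH : (Wh * Whᵀ - W * Wᵀ)ᴴ = Wh * Whᵀ - W * Wᵀ := by
      rw [conjTranspose_eq_transpose_of_trivial, transpose_sub, hPt, hQt]
    rw [hH, sub_mul, mul_sub, mul_sub, hQQ, hQP, hPQ, hPP]
    abel
  have h3 := posSemidef_conjTranspose_mul_self (Wh * Whᵀ - W * Wᵀ)
  rwa [hsq] at h3

lemma one_sub_proj_psd (Wh : Matrix (Fin m) (Fin rh) ℝ) (hWh : Whᵀ * Wh = 1) :
    ((1 : Matrix (Fin m) (Fin m) ℝ) - Wh * Whᵀ).PosSemidef := by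
  have hQt : (Wh * Whᵀ)ᵀ = Wh * Whᵀ := by rw [transpose_mul, transpose_transpose]
  have hQQ : (Wh * Whᵀ) * (Wh * Whᵀ) = Wh * Whᵀ := by
    rw [← Matrix.mul_assoc, Matrix.mul_assoc Wh, hWh, Matrix.mul_one]
  have hsq : ((1:Matrix (Fin m) (Fin m) ℝ) - Wh * Whᵀ)ᴴ * (1 - Wh * Whᵀ)
      = 1 - Wh * Whᵀ := by
    have hH : ((1:Matrix (Fin m) (Fin m) ℝ) - Wh * Whᵀ)ᴴ = 1 - Wh * Whᵀ := by
      rw [conjTranspose_eq_transpose_of_trivial, transpose_sub, transpose_one, hQt]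
    rw [hH, sub_mul, mul_sub, mul_sub, hQQ]
    simp only [Matrix.one_mul, Matrix.mul_one]
    abel
  have h3 := posSemidef_conjTranspose_mul_self ((1:Matrix (Fin m) (Fin m) ℝ) - Wh * Whᵀ)
  rwa [hsq] at h3

end Aux3

section Aux4
open Matrix
variable {m r : ℕ}

lemma det_compress_eq (A B : Matrix (Fin m) (Fin m) ℝ)
    (hBB : B * B = A) (lam : ℝ) (hlam : 0 < lam)
    (W : Matrix (Fin m) (Fin r) ℝ) (hW : Wᵀ * W = 1) :
    (lam • 1 + W * (Wᵀ * A * W) * Wᵀ).det = (lam • 1 + B * (W * Wᵀ) * B).det := by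
  have hlam' : lam ≠ 0 := ne_of_gt hlam
  have e1 : lam • (1 : Matrix (Fin m) (Fin m) ℝ) + W * (Wᵀ * A * W) * Wᵀ
      = lam • (1 + (W * (lam⁻¹ • (Wᵀ * A * W))) * Wᵀ) := by
    rw [smul_add]
    congr 1
    rw [Matrix.mul_smul, Matrix.smul_mul, smul_smul, mul_inv_cancel₀ hlam', one_smul]
  have e2 : lam • (1 : Matrix (Fin m) (Fin m) ℝ) + B * (W * Wᵀ) * B
      = lam • (1 + (lam⁻¹ • (B * W)) * (Wᵀ * B)) := by
    rw [smul_add]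
    congr 1
    rw [Matrix.smul_mul, smul_smul, mul_inv_cancel₀ hlam', one_smul,
      ← Matrix.mul_assoc, ← Matrix.mul_assoc, Matrix.mul_assoc B W Wᵀ]
  have d1 := det_one_add_mul_comm (W * (lam⁻¹ • (Wᵀ * A * W))) Wᵀ
  have d2 := det_one_add_mul_comm (lam⁻¹ • (B * W)) (Wᵀ * B)
  rw [e1, e2, det_smul, det_smul, d1, d2]
  congr 2
  rw [← Matrix.mul_assoc, hW, Matrix.one_mul, Matrix.mul_smul,
    Matrix.mul_assoc Wᵀ B, ← Matrix.mul_assoc B B, hBB, ← Matrix.mul_assoc]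

end Aux4

/-- augmentation does not harm the trace-of-log approximation. -/
theorem stmt7 {m r rh : ℕ} (hr : r ≤ rh) (hrh : rh ≤ m)
    (A : Matrix (Fin m) (Fin m) ℝ) (hA : A.PosSemidef)
    (lam : ℝ) (hlam : 0 < lam)
    (W : Matrix (Fin m) (Fin r) ℝ) (hW : Wᵀ * W = 1)
    (Wh : Matrix (Fin m) (Fin rh) ℝ) (hWh : Whᵀ * Wh = 1)
    (hrange : colSpan W ≤ colSpan Wh) :
    traceLog (lam • 1 + W * (Wᵀ * A * W) * Wᵀ) ≤
        traceLog (lam • 1 + Wh * (Whᵀ * A * Wh) * Whᵀ) ∧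
      traceLog (lam • 1 + Wh * (Whᵀ * A * Wh) * Whᵀ) ≤ traceLog (lam • 1 + A) := by
  have hBB := (open scoped MatrixOrder in CFC.sqrt_mul_sqrt_self A hA.nonneg)
  set B := (open scoped MatrixOrder in CFC.sqrt A) with hBdef
  have hBH : Bᴴ = B := (open scoped MatrixOrder in (CFC.sqrt_nonneg A).posSemidef).1
  have hP : (W * Wᵀ).PosSemidef := by
    have := posSemidef_self_mul_conjTranspose W
    rwa [conjTranspose_eq_transpose_of_trivial] at this
  have hQ : (Wh * Whᵀ).PosSemidef := by
    have := posSemidef_self_mul_conjTranspose Wh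
    rwa [conjTranspose_eq_transpose_of_trivial] at this
  have bpsd : ∀ {M : Matrix (Fin m) (Fin m) ℝ}, M.PosSemidef → (B * M * B).PosSemidef := by
    intro M hM
    have := hM.mul_mul_conjTranspose_same B
    rwa [hBH] at this
  have hQP := proj_diff_psd W hW Wh hWh hrange
  have h1Q := one_sub_proj_psd Wh hWh
  have hX1 : (lam • 1 + B * (W * Wᵀ) * B).PosDef :=
    (smul_one_posDef hlam).add_posSemidef (bpsd hP)
  have hX2 : (lam • 1 + B * (Wh * Whᵀ) * B).PosDef :=
    (smul_one_posDef hlam).add_posSemidef (bpsd hQ)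
  have key12 : lam • (1 : Matrix (Fin m) (Fin m) ℝ) + B * (Wh * Whᵀ) * B
      = (lam • 1 + B * (W * Wᵀ) * B) + B * (Wh * Whᵀ - W * Wᵀ) * B := by
    rw [Matrix.mul_sub, Matrix.sub_mul]; abel
  have key23 : lam • (1 : Matrix (Fin m) (Fin m) ℝ) + A
      = (lam • 1 + B * (Wh * Whᵀ) * B) + B * (1 - Wh * Whᵀ) * B := by
    rw [Matrix.mul_sub, Matrix.sub_mul, Matrix.mul_one, hBB]; abel
  have d12 : (lam • 1 + B * (W * Wᵀ) * B).det ≤ (lam • 1 + B * (Wh * Whᵀ) * B).det := by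
    rw [key12]; exact det_le_det_add hX1 (bpsd hQP)
  have d23 : (lam • 1 + B * (Wh * Whᵀ) * B).det ≤ (lam • 1 + A).det := by
    rw [key23]; exact det_le_det_add hX2 (bpsd h1Q)
  have eW := det_compress_eq A B hBB lam hlam W hW
  have eWh := det_compress_eq A B hBB lam hlam Wh hWh
  constructor
  · unfold traceLog
    rw [eW, eWh]
    exact Real.log_le_log hX1.det_pos d12
  · unfold traceLog
    rw [eWh]
    exact Real.log_le_log hX2.det_pos d23
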